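/- arXiv:2601.15124 — 2 statements merged into one kernel-verified Lean document; each statement's English description precedes it below -/
import Mathlib

section
/- For every radius r ≥ 0 there exist two finite graphs G₁, G₂ with roots v, u respectively such that the r-hop neighborhoods (balls of radius r) of v and u are isomorphic as rooted graphs, yet for some k the closed-walk counts differ: (A₁^k)_{vv} ≠ (A₂^k)_{uu}. Consequently the Walk-Spectrum Encodings of sufficiently large order distinguish v and u. -/
open SimpleGraph

/-- Path graph on `Fin (r+2)`. -/
def GP (r : ℕ) : SimpleGraph (Fin (r+2)) :=
  SimpleGraph.fromRel (fun a b => b.val = a.val + 1)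

/-- Path of length `r+1` ending in a triangle, on `Fin (r+4)`. -/
def GC (r : ℕ) : SimpleGraph (Fin (r+4)) :=
  SimpleGraph.fromRel (fun a b => b.val = a.val + 1 ∨ (a.val = r+1 ∧ b.val = r+3))

lemma GP_adj (r : ℕ) (a b : Fin (r+2)) :
    (GP r).Adj a b ↔ a ≠ b ∧ (b.val = a.val + 1 ∨ a.val = b.val + 1) := by
  simp [GP, fromRel_adj]

lemma GC_adj (r : ℕ) (a b : Fin (r+4)) :
    (GC r).Adj a b ↔ a ≠ b ∧ ((b.val = a.val + 1 ∨ (a.val = r+1 ∧ b.val = r+3)) ∨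
      (a.val = b.val + 1 ∨ (b.val = r+1 ∧ a.val = r+3))) := by
  simp [GC, fromRel_adj]

lemma GP_walk_parity (r : ℕ) {a b : Fin (r+2)} (p : (GP r).Walk a b) :
    Even (p.length + a.val + b.val) := by
  induction p with
  | nil => simp only [Walk.length_nil, Nat.even_iff]; omega
  | @cons x y z h q ih =>
    rw [GP_adj] at h
    rw [Walk.length_cons]
    simp only [Nat.even_iff] at ih ⊢
    omega

lemma GP_exists_walk (r : ℕ) (m : ℕ) (h : m ≤ r + 1) :
    ∃ p : (GP r).Walk ⟨0, by omega⟩ ⟨m, by omega⟩, p.length = m := by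
  induction m with
  | zero => exact ⟨Walk.nil, rfl⟩
  | succ n ih =>
    obtain ⟨p, hp⟩ := ih (by omega)
    have hadj : (GP r).Adj ⟨n, by omega⟩ ⟨n+1, by omega⟩ := by
      rw [GP_adj]
      exact ⟨by simp [Fin.ext_iff], Or.inl rfl⟩
    exact ⟨p.concat hadj, by rw [Walk.length_concat, hp]⟩

lemma GC_exists_walk (r : ℕ) (m : ℕ) (h : m ≤ r + 3) :
    ∃ p : (GC r).Walk ⟨0, by omega⟩ ⟨m, by omega⟩, p.length = m := by
  induction m with
  | zero => exact ⟨Walk.nil, rfl⟩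
  | succ n ih =>
    obtain ⟨p, hp⟩ := ih (by omega)
    have hadj : (GC r).Adj ⟨n, by omega⟩ ⟨n+1, by omega⟩ := by
      rw [GC_adj]
      exact ⟨by simp [Fin.ext_iff], Or.inl (Or.inl rfl)⟩
    exact ⟨p.concat hadj, by rw [Walk.length_concat, hp]⟩

lemma GP_walk_lb (r : ℕ) {a b : Fin (r+2)} (p : (GP r).Walk a b) :
    b.val ≤ a.val + p.length := by
  induction p with
  | nil => simp
  | @cons x y z h q ih =>
    rw [GP_adj] at h
    rw [Walk.length_cons]
    omega

lemma GC_walk_lb (r : ℕ) {a b : Fin (r+4)} (p : (GC r).Walk a b) :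
    min b.val (r+2) ≤ min a.val (r+2) + p.length := by
  induction p with
  | nil => simp
  | @cons x y z h q ih =>
    rw [GC_adj] at h
    rw [Walk.length_cons]
    omega

lemma GP_ball (r : ℕ) (w : Fin (r+2)) :
    (GP r).dist ⟨0, by omega⟩ w ≤ r ↔ w.val ≤ r := by
  constructor
  · intro hd
    have hre : (GP r).Reachable ⟨0, by omega⟩ w := by
      obtain ⟨p, -⟩ := GP_exists_walk r w.val (by omega)
      have hw : (⟨w.val, by omega⟩ : Fin (r+2)) = w := by simp [Fin.ext_iff]
      exact ⟨hw ▸ p⟩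
    obtain ⟨p, hp⟩ := hre.exists_walk_length_eq_dist
    have := GP_walk_lb r p
    simp only [hp] at this
    omega
  · intro hw
    obtain ⟨p, hp⟩ := GP_exists_walk r w.val (by omega)
    have hwe : (⟨w.val, by omega⟩ : Fin (r+2)) = w := by simp [Fin.ext_iff]
    rw [← hwe]
    calc (GP r).dist _ _ ≤ p.length := SimpleGraph.dist_le p
    _ = w.val := hp
    _ ≤ r := hw

lemma GC_ball (r : ℕ) (w : Fin (r+4)) :
    (GC r).dist ⟨0, by omega⟩ w ≤ r ↔ w.val ≤ r := by
  constructor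
  · intro hd
    have hre : (GC r).Reachable ⟨0, by omega⟩ w := by
      obtain ⟨p, -⟩ := GC_exists_walk r w.val (by omega)
      have hw : (⟨w.val, by omega⟩ : Fin (r+4)) = w := by simp [Fin.ext_iff]
      exact ⟨hw ▸ p⟩
    obtain ⟨p, hp⟩ := hre.exists_walk_length_eq_dist
    have := GC_walk_lb r p
    simp only [hp] at this
    omega
  · intro hw
    obtain ⟨p, hp⟩ := GC_exists_walk r w.val (by omega)
    have hwe : (⟨w.val, by omega⟩ : Fin (r+4)) = w := by simp [Fin.ext_iff]
    rw [← hwe]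
    calc (GC r).dist _ _ ≤ p.length := SimpleGraph.dist_le p
    _ = w.val := hp
    _ ≤ r := hw

/-- For every radius `r` there exist two finite graphs with roots `v` and `u` whose balls of
radius `r` (induced subgraphs on vertices at distance `≤ r`) are isomorphic as rooted graphs,
yet for some `k` the numbers of closed walks of length `k` at `v` and `u` differ; consequently
the Walk-Spectrum Encodings `(α^k · #closed walks of length k)_{k=1}^K` of sufficiently large
order `K` distinguish `v` and `u`. -/
theorem exists_rooted_ball_iso_but_walk_counts_ne (r : ℕ) :
    ∃ (n₁ n₂ : ℕ) (G₁ : SimpleGraph (Fin n₁)) (G₂ : SimpleGraph (Fin n₂))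
      (v : Fin n₁) (u : Fin n₂),
      (∃ φ : (G₁.induce {w | G₁.dist v w ≤ r}) ≃g (G₂.induce {w | G₂.dist u w ≤ r}),
          φ ⟨v, by simp [SimpleGraph.dist_self]⟩ = ⟨u, by simp [SimpleGraph.dist_self]⟩) ∧
      (∃ k : ℕ, Nat.card {p : G₁.Walk v v // p.length = k} ≠
          Nat.card {p : G₂.Walk u u // p.length = k}) ∧
      ∀ α : ℝ, 0 < α → α < 1 → ∃ K : ℕ,
        (fun j : Fin K => α ^ (j.val + 1) *
            (Nat.card {p : G₁.Walk v v // p.length = j.val + 1} : ℝ)) ≠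
        (fun j : Fin K => α ^ (j.val + 1) *
            (Nat.card {p : G₂.Walk u u // p.length = j.val + 1} : ℝ)) := by
  classical
  refine ⟨r+2, r+4, GP r, GC r, ⟨0, by omega⟩, ⟨0, by omega⟩, ?_, ?_, ?_⟩
  · -- the rooted isomorphism of balls of radius r
    refine ⟨⟨⟨fun x => ⟨⟨x.1.val, by have := (GP_ball r x.1).mp x.2; omega⟩,
        (GC_ball r _).mpr (by simpa using (GP_ball r x.1).mp x.2)⟩,
      fun x => ⟨⟨x.1.val, by have := (GC_ball r x.1).mp x.2; omega⟩,
        (GP_ball r _).mpr (by simpa using (GC_ball r x.1).mp x.2)⟩,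
      fun x => by ext; rfl, fun x => by ext; rfl⟩, ?_⟩, rfl⟩
    rintro ⟨a, ha⟩ ⟨b, hb⟩
    have ha' := (GP_ball r a).mp ha
    have hb' := (GP_ball r b).mp hb
    simp only [Equiv.coe_fn_mk, comap_adj, Function.Embedding.coe_subtype, GP_adj, GC_adj,
      ne_eq, Fin.ext_iff]
    constructor
    · rintro ⟨h1, h2⟩
      exact ⟨by simpa using h1, by omega⟩
    · rintro ⟨h1, h2⟩
      exact ⟨by simpa using h1, by omega⟩
  · -- walk counts differ at k = 2r+5
    refine ⟨2*r+5, ?_⟩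
    have hE : IsEmpty {p : (GP r).Walk ⟨0, by omega⟩ ⟨0, by omega⟩ // p.length = 2*r+5} := by
      constructor
      rintro ⟨p, hp⟩
      have := GP_walk_parity r p
      rw [hp] at this
      simp only [Nat.even_iff] at this
      omega
    rw [Nat.card_of_isEmpty]
    have hNE : Nonempty {p : (GC r).Walk ⟨0, by omega⟩ ⟨0, by omega⟩ // p.length = 2*r+5} := by
      obtain ⟨p, hp⟩ := GC_exists_walk r (r+1) (by omega)
      have h1 : (GC r).Adj ⟨r+1, by omega⟩ ⟨r+2, by omega⟩ := by
        rw [GC_adj]; exact ⟨by simp [Fin.ext_iff], Or.inl (Or.inl rfl)⟩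
      have h2 : (GC r).Adj ⟨r+2, by omega⟩ ⟨r+3, by omega⟩ := by
        rw [GC_adj]; exact ⟨by simp [Fin.ext_iff], Or.inl (Or.inl rfl)⟩
      have h3 : (GC r).Adj ⟨r+3, by omega⟩ ⟨r+1, by omega⟩ := by
        rw [GC_adj]; exact ⟨by simp [Fin.ext_iff], Or.inr (Or.inr ⟨rfl, rfl⟩)⟩
      refine ⟨⟨p.append ((Walk.cons h1 (Walk.cons h2 (Walk.cons h3 Walk.nil))).append
        p.reverse), ?_⟩⟩
      rw [Walk.length_append, Walk.length_append, Walk.length_reverse, hp]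
      simp only [Walk.length_cons, Walk.length_nil]
      omega
    exact fun h => Nat.card_pos.ne' h.symm
  · -- the encodings differ for K = 2r+5
    intro α hα0 hα1
    refine ⟨2*r+5, fun hEq => ?_⟩
    have h := congrFun hEq ⟨2*r+4, by omega⟩
    simp only at h
    have hE : IsEmpty {p : (GP r).Walk ⟨0, by omega⟩ ⟨0, by omega⟩ // p.length = 2*r+4+1} := by
      constructor
      rintro ⟨p, hp⟩
      have := GP_walk_parity r p
      rw [hp] at this
      simp only [Nat.even_iff] at this
      omega
    have hNE : Nonempty {p : (GC r).Walk ⟨0, by omega⟩ ⟨0, by omega⟩ // p.length = 2*r+4+1} := by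
      obtain ⟨p, hp⟩ := GC_exists_walk r (r+1) (by omega)
      have h1 : (GC r).Adj ⟨r+1, by omega⟩ ⟨r+2, by omega⟩ := by
        rw [GC_adj]; exact ⟨by simp [Fin.ext_iff], Or.inl (Or.inl rfl)⟩
      have h2 : (GC r).Adj ⟨r+2, by omega⟩ ⟨r+3, by omega⟩ := by
        rw [GC_adj]; exact ⟨by simp [Fin.ext_iff], Or.inl (Or.inl rfl)⟩
      have h3 : (GC r).Adj ⟨r+3, by omega⟩ ⟨r+1, by omega⟩ := by
        rw [GC_adj]; exact ⟨by simp [Fin.ext_iff], Or.inr (Or.inr ⟨rfl, rfl⟩)⟩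
      refine ⟨⟨p.append ((Walk.cons h1 (Walk.cons h2 (Walk.cons h3 Walk.nil))).append
        p.reverse), ?_⟩⟩
      rw [Walk.length_append, Walk.length_append, Walk.length_reverse, hp]
      simp only [Walk.length_cons, Walk.length_nil]
      omega
    rw [Nat.card_of_isEmpty] at h
    have hpos : 0 < Nat.card {p : (GC r).Walk ⟨0, by omega⟩ ⟨0, by omega⟩ //
        p.length = 2*r+4+1} := Nat.card_pos
    have hα : (0:ℝ) < α ^ (2*r+4+1) := pow_pos hα0 _
    have : (0:ℝ) < α ^ (2*r+4+1) * (Nat.card {p : (GC r).Walk ⟨0, by omega⟩ ⟨0, by omega⟩ //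
        p.length = 2*r+4+1} : ℝ) := by positivity
    rw [← h] at this
    simp at this
end

section
/- In a graph formed by a path x_0,…,x_{r+1} with a cycle C attached at x_{r+1} (sharing only x_{r+1}), any closed walk at x_0 that visits a vertex of C not on the path must traverse the path segment to x_{r+1} and back, hence has length at least 2(r+1) + g, where g is the length of the shortest closed walk of C at x_{r+1} using cycle edges; in particular every closed walk at x_0 of length ≤ 2(r+1) stays within the path. -/
/-- The graph on `Fin (r+1+q)` consisting of a path `x_0, …, x_{r+1}` (the vertices with
values `0, …, r+1`) together with a cycle of length `q` through the vertices with values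
`r+1, …, r+q`, attached to the path exactly at `x_{r+1}`. -/
def pathCycleGraph (r q : ℕ) : SimpleGraph (Fin (r + 1 + q)) :=
  SimpleGraph.fromRel (fun a b => b.val = a.val + 1 ∨ (a.val = r + 1 ∧ b.val = r + q))

/-- The subgraph of `pathCycleGraph r q` consisting of the cycle edges only (both endpoints
among the cycle vertices, i.e. with values `≥ r+1`). -/
def cyclePart (r q : ℕ) : SimpleGraph (Fin (r + 1 + q)) :=
  SimpleGraph.fromRel (fun a b =>
    (b.val = a.val + 1 ∨ (a.val = r + 1 ∧ b.val = r + q)) ∧ r + 1 ≤ a.val ∧ r + 1 ≤ b.val)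

/-- The potential function: `min v.val (r+2)`. -/
def pcgPhi (r : ℕ) {n : ℕ} (v : Fin n) : ℕ := min v.val (r + 2)

lemma pcg_adj (r q : ℕ) {a b : Fin (r + 1 + q)} (h : (pathCycleGraph r q).Adj a b) :
    (b.val = a.val + 1 ∨ (a.val = r + 1 ∧ b.val = r + q)) ∨
      (a.val = b.val + 1 ∨ (b.val = r + 1 ∧ a.val = r + q)) := by
  have := (SimpleGraph.fromRel_adj _ a b).mp h
  tauto

lemma pcg_step (r q : ℕ) (hq : 3 ≤ q) {a b : Fin (r + 1 + q)}
    (h : (pathCycleGraph r q).Adj a b) : pcgPhi r b ≤ pcgPhi r a + 1 := by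
  have h' := pcg_adj r q h
  have ha := a.isLt
  have hb := b.isLt
  unfold pcgPhi
  omega

lemma pcg_walk_bound (r q : ℕ) (hq : 3 ≤ q) {a b : Fin (r + 1 + q)}
    (w : (pathCycleGraph r q).Walk a b) : pcgPhi r b ≤ pcgPhi r a + w.length := by
  induction w with
  | nil => simp
  | cons h p ih =>
    have := pcg_step r q hq h
    rw [SimpleGraph.Walk.length_cons]
    omega

lemma closed_walk_length_ne_one {V : Type*} {G : SimpleGraph V} {x : V}
    (c : G.Walk x x) : c.length ≠ 1 := by
  cases c with
  | nil => simp
  | cons h p =>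
    intro hl
    rw [SimpleGraph.Walk.length_cons] at hl
    have hp0 : p.length = 0 := by omega
    have := p.eq_of_length_eq_zero hp0
    subst this
    exact h.ne rfl

/-- In the path-with-attached-cycle graph, any closed walk at the root `x_0` that visits a
cycle vertex not on the path (value `> r+1`) must traverse the path segment to `x_{r+1}` and
back, hence has length at least `2(r+1) + g`, where `g` is the length of a shortest positive
closed walk at `x_{r+1}` using only cycle edges.  In particular, every closed walk at `x_0`
of length `≤ 2(r+1)` stays within the path. -/
theorem pathCycleGraph_closed_walk_length_bound (r q : ℕ) (hq : 3 ≤ q) :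
    (∀ w : (pathCycleGraph r q).Walk ⟨0, by omega⟩ ⟨0, by omega⟩,
        (∃ t ∈ w.support, r + 1 < t.val) →
        2 * (r + 1) +
            sInf {L : ℕ | 0 < L ∧
              ∃ c : (cyclePart r q).Walk ⟨r + 1, by omega⟩ ⟨r + 1, by omega⟩, c.length = L}
          ≤ w.length) ∧
    (∀ w : (pathCycleGraph r q).Walk ⟨0, by omega⟩ ⟨0, by omega⟩,
        w.length ≤ 2 * (r + 1) → ∀ t ∈ w.support, t.val ≤ r + 1) := by
  -- the distinguished vertices
  have hXlt : r + 1 < r + 1 + q := by omega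
  have hYlt : r + 2 < r + 1 + q := by omega
  -- the backtracking walk of length 2 in the cycle part
  have hadj : (cyclePart r q).Adj ⟨r + 1, hXlt⟩ ⟨r + 2, hYlt⟩ := by
    rw [cyclePart, SimpleGraph.fromRel_adj]
    refine ⟨?_, Or.inl ⟨Or.inl rfl, by simp, by simp⟩⟩
    intro hc
    have := congrArg Fin.val hc
    simp at this
  set S : Set ℕ := {L : ℕ | 0 < L ∧
      ∃ c : (cyclePart r q).Walk ⟨r + 1, by omega⟩ ⟨r + 1, by omega⟩, c.length = L} with hS
  have h2S : 2 ∈ S := by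
    refine ⟨by norm_num, SimpleGraph.Walk.cons hadj (SimpleGraph.Walk.cons hadj.symm
      SimpleGraph.Walk.nil), by simp⟩
  have hsInf : sInf S = 2 := by
    have hle : sInf S ≤ 2 := Nat.sInf_le h2S
    obtain ⟨hpos, c, hc⟩ := Nat.sInf_mem (⟨2, h2S⟩ : S.Nonempty)
    have hne1 : sInf S ≠ 1 := by
      intro h1
      exact closed_walk_length_ne_one c (hc.trans h1)
    omega
  have main : ∀ w : (pathCycleGraph r q).Walk ⟨0, by omega⟩ ⟨0, by omega⟩,
      (∃ t ∈ w.support, r + 1 < t.val) → 2 * (r + 1) + 2 ≤ w.length := by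
    intro w ⟨t, ht, htval⟩
    have hsplit := w.take_spec ht
    have hlen : (w.takeUntil t ht).length + (w.dropUntil t ht).length = w.length := by
      rw [← SimpleGraph.Walk.length_append, hsplit]
    have htb := t.isLt
    have h1 : r + 2 ≤ (w.takeUntil t ht).length := by
      have := pcg_walk_bound r q hq (w.takeUntil t ht)
      unfold pcgPhi at this
      simp only at this
      omega
    have h2 : r + 2 ≤ (w.dropUntil t ht).length := by
      have := pcg_walk_bound r q hq (w.dropUntil t ht).reverse
      rw [SimpleGraph.Walk.length_reverse] at this
      unfold pcgPhi at this
      simp only at this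
      omega
    omega
  constructor
  · intro w hw
    rw [hsInf]
    exact main w hw
  · intro w hwlen t ht
    by_contra hc
    push_neg at hc
    have := main w ⟨t, ht, hc⟩
    omega
end
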